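/- For any first-order grammar G and regular term E = E(x₁): if there is no u ∈ A* with E →^u x₁ in L_G, then E(T) ∼ E(T') for all ground regular terms T, T'. -/

import Mathlib

namespace FOGPaper

variable {S A : Type*}

/-- Extension of the single-step transition relations to words. -/
def Steps (tr : A → S → S → Prop) : List A → S → S → Prop
  | [], s, t => t = s
  | a :: w, s, t => ∃ s', tr a s s' ∧ Steps tr w s' t

/-- The trace set of a state: the finite words it enables. -/
def traces (tr : A → S → S → Prop) (s : S) : Set (List A) :=
  {w | ∃ t, Steps tr w s t}

/-- The traces of length at most `k`. -/
def tracesLe (tr : A → S → S → Prop) (k : ℕ) (s : S) : Set (List A) :=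
  {w ∈ traces tr s | w.length ≤ k}

/-- `r ∼ₖ s` : `r` and `s` enable the same words of length at most `k`. -/
def SimK (tr : A → S → S → Prop) (k : ℕ) (r s : S) : Prop :=
  tracesLe tr k r = tracesLe tr k s

/-- `r ∼ s` : trace equivalence. -/
def Sim (tr : A → S → S → Prop) (r s : S) : Prop :=
  traces tr r = traces tr s

/-- The equivalence level in ℕ ∪ {ω}: the supremum of the `k` with `r ∼ₖ s`
(equal to `k` iff `r ∼ₖ s` and not `r ∼ₖ₊₁ s`, and to `ω = ⊤` iff `r ∼ s`). -/
noncomputable def eqLevel (tr : A → S → S → Prop) (r s : S) : ℕ∞ :=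
  ⨆ k ∈ {k : ℕ | SimK tr k r s}, (k : ℕ∞)

/-- The offending words for `(r,s)` : the shortest words lying in exactly one of
`traces r`, `traces s`. -/
def offWords (tr : A → S → S → Prop) (r s : S) : Set (List A) :=
  {w | w ∈ (traces tr r \ traces tr s) ∪ (traces tr s \ traces tr r) ∧
       ∀ v ∈ (traces tr r \ traces tr s) ∪ (traces tr s \ traces tr r),
         w.length ≤ v.length}

/-- A labelled transition system is deterministic if each `→ᵃ` is a partial function. -/
def IsDet (tr : A → S → S → Prop) : Prop :=
  ∀ a r s₁ s₂, tr a r s₁ → tr a r s₂ → s₁ = s₂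

/-- The infinite traces (ω-words enabled in a state). -/
def omTraces (tr : A → S → S → Prop) (s : S) : Set (ℕ → A) :=
  {α | ∃ f : ℕ → S, f 0 = s ∧ ∀ i, tr (α i) (f i) (f (i + 1))}

/-- Concatenation of a finite word with an infinite word. -/
def wApp (u : List A) (α : ℕ → A) : ℕ → A := fun i =>
  if h : i < u.length then u[i]'h else α (i - u.length)


/-- Possibly-infinite terms over nonterminals `N` (and variables `x₁, x₂, …`),
represented as partial labelling functions on positions (`Sum.inr i` is the
variable `xᵢ`). -/
abbrev Tm (N : Type*) := List ℕ → Option (N ⊕ ℕ)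

/-- Arity of a label: nonterminals have their arity, variables have arity 0. -/
def arityOf {N : Type*} (arity : N → ℕ) : N ⊕ ℕ → ℕ
  | Sum.inl X => arity X
  | Sum.inr _ => 0

/-- Well-formed term: the domain is nonempty (contains the root) and matches the
arities of the labels (which makes it prefix-closed). -/
def TmWF {N : Type*} (arity : N → ℕ) (E : Tm N) : Prop :=
  (E []).isSome ∧
    ∀ γ i, (E (γ ++ [i])).isSome ↔ ∃ v, E γ = some v ∧ 1 ≤ i ∧ i ≤ arityOf arity v

/-- The subterm (occurrence) of `E` at position `γ`. -/
def subAt {N : Type*} (E : Tm N) (γ : List ℕ) : Tm N := fun δ => E (γ ++ δ)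

/-- A term is regular if it has only finitely many subterms. -/
def TmRegular {N : Type*} (E : Tm N) : Prop := (Set.range (subAt E)).Finite

/-- A term is finite if its domain is finite. -/
def TmFinite {N : Type*} (E : Tm N) : Prop := {γ | (E γ).isSome}.Finite

/-- A term is ground if no variable occurs in it. -/
def TmGround {N : Type*} (E : Tm N) : Prop := ∀ γ i, E γ ≠ some (Sum.inr i)

/-- `E = E(x₁,…,xₙ)` : all variables occurring in `E` are among `x₁,…,xₙ`. -/
def VarsBdd {N : Type*} (n : ℕ) (E : Tm N) : Prop :=
  ∀ γ i, E γ = some (Sum.inr i) → 1 ≤ i ∧ i ≤ n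

/-- The term consisting of the single variable `xᵢ`. -/
def varTm (N : Type*) (i : ℕ) : Tm N := fun γ => if γ = [] then some (Sum.inr i) else none

open Classical in
/-- Substitution `E σ`: each occurrence of the variable `xᵢ` is replaced by `σ i`.
(For a well-formed `E`, the decomposition of a position through a variable
occurrence is unique, so the choice is canonical.) -/
noncomputable def subst {N : Type*} (E : Tm N) (σ : ℕ → Tm N) : Tm N := fun γ =>
  if h : ∃ p : List ℕ × ℕ × List ℕ, γ = p.1 ++ p.2.2 ∧ E p.1 = some (Sum.inr p.2.1)
  then σ h.choose.2.1 h.choose.2.2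
  else E γ

/-- The term `X G₁ G₂ …` with root `X` and `i`-th child `Gs i`. -/
def node {N : Type*} (X : N) (Gs : ℕ → Tm N) : Tm N := fun γ =>
  match γ with
  | [] => some (Sum.inl X)
  | i :: δ => Gs i δ

/-- A first-order grammar: ranked nonterminals and a finite set of root-rewriting
rules `X x₁ … xₘ →ᵃ E` where `E` is a finite term with variables among `x₁,…,xₘ`,
`m = arity X`. -/
structure FOG (N A : Type*) where
  arity : N → ℕ
  rules : Set (N × A × Tm N)
  rules_fin : rules.Finite
  rules_wf : ∀ r ∈ rules, TmFinite r.2.2 ∧ TmWF arity r.2.2 ∧ VarsBdd (arity r.1) r.2.2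

/-- A grammar is deterministic: at most one rule for each pair `(X, a)`. -/
def FOG.Det {N A : Type*} (G : FOG N A) : Prop :=
  ∀ X a E E', (X, a, E) ∈ G.rules → (X, a, E') ∈ G.rules → E = E'

/-- The transition relation of the LTS `L_G` generated by the grammar `G` on terms:
each rule `X x₁ … xₘ →ᵃ E` gives `X G₁ … Gₘ →ᵃ E(G₁,…,Gₘ)`. -/
def gstep {N A : Type*} (G : FOG N A) (a : A) (s t : Tm N) : Prop :=
  ∃ X E Gs, (X, a, E) ∈ G.rules ∧ s = node X Gs ∧ t = subst E Gs


section Lemmas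

variable {N : Type*} {ar : N → ℕ}

/-- Prefix-closedness of well-formed terms. -/
lemma wf_prefix_some {E : Tm N} (h : TmWF ar E) :
    ∀ δ γ, (E (γ ++ δ)).isSome → (E γ).isSome := by
  intro δ
  induction δ using List.reverseRecOn with
  | nil => intro γ; simp
  | append_singleton δ k ih =>
    intro γ hs
    apply ih
    rw [← List.append_assoc] at hs
    obtain ⟨v, hv, _⟩ := (h.2 (γ ++ δ) k).mp hs
    rw [hv]; rfl

/-- Variable positions have nothing strictly below them. -/
lemma wf_var_no_ext {E : Tm N} (h : TmWF ar E) {γ : List ℕ} {i : ℕ}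
    (hv : E γ = some (Sum.inr i)) : ∀ δ, δ ≠ [] → E (γ ++ δ) = none := by
  rintro (_ | ⟨k, δ⟩) hne
  · exact absurd rfl hne
  · rw [← Option.not_isSome_iff_eq_none]
    intro hcon
    have h1 : (E ((γ ++ [k]) ++ δ)).isSome := by
      rw [List.append_assoc]; exact hcon
    have h2 : (E (γ ++ [k])).isSome := wf_prefix_some h δ _ h1
    obtain ⟨v, hv', h1k, hk⟩ := (h.2 γ k).mp h2
    rw [hv] at hv'
    cases hv'
    simp [arityOf] at hk
    omega

/-- Unique decomposition through a variable position. -/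
lemma wf_uniq_decomp {E : Tm N} (h : TmWF ar E) {γ₁ γ₂ δ₁ δ₂ : List ℕ} {i₁ i₂ : ℕ}
    (heq : γ₁ ++ δ₁ = γ₂ ++ δ₂) (h1 : E γ₁ = some (Sum.inr i₁))
    (h2 : E γ₂ = some (Sum.inr i₂)) : γ₁ = γ₂ := by
  have hp : γ₁ <+: γ₂ ∨ γ₂ <+: γ₁ :=
    List.prefix_or_prefix_of_prefix ⟨δ₁, heq⟩ ⟨δ₂, rfl⟩
  rcases hp with ⟨e, he⟩ | ⟨e, he⟩
  · rcases eq_or_ne e [] with rfl | hne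
    · simpa using he
    · exfalso
      have := wf_var_no_ext h h1 e hne
      rw [← he, this] at h2
      exact absurd h2 (by simp)
  · rcases eq_or_ne e [] with rfl | hne
    · simpa using he.symm
    · exfalso
      have := wf_var_no_ext h h2 e hne
      rw [← he, this] at h1
      exact absurd h1 (by simp)

/-- Substitution at a position below a variable occurrence. -/
lemma subst_var {E : Tm N} (h : TmWF ar E) {γ₁ : List ℕ} {i : ℕ}
    (hv : E γ₁ = some (Sum.inr i)) (σ : ℕ → Tm N) (δ : List ℕ) :
    subst E σ (γ₁ ++ δ) = σ i δ := by
  have hex : ∃ p : List ℕ × ℕ × List ℕ,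
      γ₁ ++ δ = p.1 ++ p.2.2 ∧ E p.1 = some (Sum.inr p.2.1) :=
    ⟨(γ₁, i, δ), rfl, hv⟩
  rw [subst, dif_pos hex]
  obtain ⟨hc1, hc2⟩ := hex.choose_spec
  have hg : hex.choose.1 = γ₁ := wf_uniq_decomp h hc1.symm hc2 hv
  rw [hg] at hc1 hc2
  rw [hv] at hc2
  have hi : hex.choose.2.1 = i := by
    have := Option.some.inj hc2
    exact (Sum.inr.inj this).symm
  have hd : hex.choose.2.2 = δ := (List.append_cancel_left hc1).symm
  rw [hi, hd]

/-- Substitution at a position with no variable occurrence above it. -/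
lemma subst_nonvar {E : Tm N} (σ : ℕ → Tm N) {γ : List ℕ}
    (hn : ∀ γ₁ i δ, γ = γ₁ ++ δ → E γ₁ ≠ some (Sum.inr i)) :
    subst E σ γ = E γ := by
  rw [subst, dif_neg]
  rintro ⟨p, hp1, hp2⟩
  exact hn p.1 p.2.1 p.2.2 hp1 hp2

/-- A subterm at a defined position of a well-formed term is well-formed. -/
lemma subAt_wf {E : Tm N} (h : TmWF ar E) {γ : List ℕ} (hs : (E γ).isSome) :
    TmWF ar (subAt E γ) := by
  constructor
  · simpa [subAt] using hs
  · intro γ' i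
    have := h.2 (γ ++ γ') i
    simpa [subAt, List.append_assoc] using this

/-- A well-formed term with a variable at the root is that variable. -/
lemma wf_root_var {E : Tm N} (h : TmWF ar E) {i : ℕ}
    (hv : E [] = some (Sum.inr i)) : E = varTm N i := by
  funext γ
  rcases eq_or_ne γ [] with rfl | hne
  · simp [varTm, hv]
  · have := wf_var_no_ext h hv γ hne
    simp only [List.nil_append] at this
    simp [varTm, hne, this]

/-- Substitution does not change a nonterminal root. -/
lemma subst_root {E : Tm N} (σ : ℕ → Tm N) {X : N}
    (hr : E [] = some (Sum.inl X)) : subst E σ [] = some (Sum.inl X) := by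
  rw [subst_nonvar σ, hr]
  intro γ₁ i δ hγ hv
  have h1 : γ₁ = [] := by
    have := List.append_eq_nil_iff.mp hγ.symm
    exact this.1
  rw [h1, hr] at hv
  exact absurd hv (by simp)

/-- Well-formedness is preserved by substitution. -/
lemma subst_wf {E : Tm N} (h : TmWF ar E) (σ : ℕ → Tm N)
    (hσ : ∀ γ i, E γ = some (Sum.inr i) → TmWF ar (σ i)) :
    TmWF ar (subst E σ) := by
  constructor
  · by_cases hx : ∃ i, E [] = some (Sum.inr i)
    · obtain ⟨i, hi⟩ := hx
      have := subst_var h hi σ []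
      simp only [List.nil_append] at this
      rw [this]
      exact (hσ [] i hi).1
    · rw [subst_nonvar σ]
      · exact h.1
      · intro γ₁ i δ hγ hv
        have h1 : γ₁ = [] := (List.append_eq_nil_iff.mp hγ.symm).1
        exact hx ⟨i, h1 ▸ hv⟩
  · intro γ k
    by_cases hdec : ∃ γ₁ i δ, γ = γ₁ ++ δ ∧ E γ₁ = some (Sum.inr i)
    · obtain ⟨γ₁, i, δ, rfl, hv⟩ := hdec
      have e1 : subst E σ (γ₁ ++ δ ++ [k]) = σ i (δ ++ [k]) := by
        rw [List.append_assoc]; exact subst_var h hv σ (δ ++ [k])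
      have e2 : subst E σ (γ₁ ++ δ) = σ i δ := subst_var h hv σ δ
      rw [e1, e2]
      exact (hσ γ₁ i hv).2 δ k
    · push_neg at hdec
      have e2 : subst E σ γ = E γ :=
        subst_nonvar σ (fun γ₁ i δ hγ hv => hdec γ₁ i δ hγ hv)
      by_cases hvk : ∃ i, E (γ ++ [k]) = some (Sum.inr i)
      · obtain ⟨i, hi⟩ := hvk
        have e1 : subst E σ (γ ++ [k]) = σ i [] := by
          have := subst_var h hi σ []
          simpa using this
        rw [e1, e2]
        constructor
        · intro _
          obtain ⟨v, hv, hk⟩ := (h.2 γ k).mp (by rw [hi]; rfl)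
          exact ⟨v, hv, hk⟩
        · intro _
          exact (hσ (γ ++ [k]) i hi).1
      · have e1 : subst E σ (γ ++ [k]) = E (γ ++ [k]) := by
          apply subst_nonvar σ
          intro γ₁ i δ hγ hv
          rcases eq_or_ne δ [] with rfl | hδ
          · simp only [List.append_nil] at hγ
            exact hvk ⟨i, by rw [hγ]; exact hv⟩
          · obtain ⟨δ', k', rfl⟩ := δ.eq_nil_or_concat.resolve_left hδ
            rw [List.concat_eq_append, ← List.append_assoc] at hγ
            obtain ⟨hγ', -⟩ := List.append_inj' hγ rfl
            exact hdec γ₁ i δ' hγ' hv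
        rw [e1, e2]
        exact h.2 γ k

/-- Variables of a substituted term come from the substitution. -/
lemma subst_varsBdd {E : Tm N} {n : ℕ} (σ : ℕ → Tm N)
    (hσ : ∀ γ i, E γ = some (Sum.inr i) → VarsBdd n (σ i)) :
    VarsBdd n (subst E σ) := by
  intro γ j hj
  rw [subst] at hj
  split at hj
  · next hex =>
    obtain ⟨hc1, hc2⟩ := hex.choose_spec
    exact hσ _ _ hc2 _ _ hj
  · next hex =>
    exact absurd ⟨(γ, j, []), by simp, hj⟩ hex

/-- Where the variables of a substituted term come from. -/
lemma subst_var_src {E : Tm N} (τ : ℕ → Tm N) {α : List ℕ} {j : ℕ}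
    (hv : subst E τ α = some (Sum.inr j)) :
    ∃ γ₁ i δ, α = γ₁ ++ δ ∧ E γ₁ = some (Sum.inr i) ∧ τ i δ = some (Sum.inr j) := by
  rw [subst] at hv
  split at hv
  · next hex =>
      obtain ⟨h1, h2⟩ := hex.choose_spec
      exact ⟨_, _, _, h1, h2, hv⟩
  · next hex => exact absurd ⟨(α, j, []), by simp, hv⟩ hex

/-- Substitution commutes with taking children, at a nonterminal root. -/
lemma subAt_subst {F : Tm N} (h : TmWF ar F) {X : N} (hr : F [] = some (Sum.inl X))
    (σ : ℕ → Tm N) (i : ℕ) : subAt (subst F σ) [i] = subst (subAt F [i]) σ := by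
  funext δ
  show subst F σ ([i] ++ δ) = subst (subAt F [i]) σ δ
  by_cases hdec : ∃ γ' j δ₂, δ = γ' ++ δ₂ ∧ F (i :: γ') = some (Sum.inr j)
  · obtain ⟨γ', j, δ₂, rfl, hv⟩ := hdec
    have hFi : (F [i]).isSome := by
      have h1 : (F ([i] ++ γ')).isSome := by
        show (F (i :: γ')).isSome
        rw [hv]; rfl
      exact wf_prefix_some h γ' [i] h1
    have hwf' : TmWF ar (subAt F [i]) := subAt_wf h hFi
    have hv' : subAt F [i] γ' = some (Sum.inr j) := hv
    have lhs : subst F σ ((i :: γ') ++ δ₂) = σ j δ₂ := subst_var h hv σ δ₂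
    have rhs := subst_var hwf' hv' σ δ₂
    rw [show [i] ++ (γ' ++ δ₂) = (i :: γ') ++ δ₂ from rfl, lhs, rhs]
  · push_neg at hdec
    have lhs : subst F σ (i :: δ) = F (i :: δ) := by
      apply subst_nonvar
      intro γ₁ j δ₂ hγ hv
      match γ₁, hγ, hv with
      | [], hγ, hv =>
        rw [hr] at hv
        exact absurd hv (by simp)
      | (i' :: γ'), hγ, hv =>
        rw [List.cons_append] at hγ
        injection hγ with h1 h2
        exact hdec γ' j δ₂ h2 (h1 ▸ hv)
    have rhs : subst (subAt F [i]) σ δ = subAt F [i] δ := by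
      apply subst_nonvar
      intro γ' j δ₂ hγ hv
      exact hdec γ' j δ₂ hγ hv
    exact lhs.trans rhs.symm

/-- Composition of substitutions. -/
lemma subst_subst {E : Tm N} (hE : TmWF ar E) (τ σ : ℕ → Tm N)
    (hτ : ∀ γ i, E γ = some (Sum.inr i) → TmWF ar (τ i)) :
    subst (subst E τ) σ = subst E (fun i => subst (τ i) σ) := by
  have hEτ : TmWF ar (subst E τ) := subst_wf hE τ hτ
  funext γ
  by_cases hdec : ∃ γ₁ i δ, γ = γ₁ ++ δ ∧ E γ₁ = some (Sum.inr i)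
  · obtain ⟨γ₁, i, δ, rfl, hv⟩ := hdec
    rw [subst_var hE hv _ δ]
    by_cases hd2 : ∃ δ₁ j δ₂, δ = δ₁ ++ δ₂ ∧ τ i δ₁ = some (Sum.inr j)
    · obtain ⟨δ₁, j, δ₂, rfl, hvj⟩ := hd2
      have h1 : subst E τ (γ₁ ++ δ₁) = some (Sum.inr j) := by
        rw [subst_var hE hv τ δ₁, hvj]
      have h2 : subst (subst E τ) σ ((γ₁ ++ δ₁) ++ δ₂) = σ j δ₂ :=
        subst_var hEτ h1 σ δ₂
      rw [List.append_assoc] at h2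
      rw [h2, subst_var (hτ γ₁ i hv) hvj σ δ₂]
    · push_neg at hd2
      have hr2 : subst (τ i) σ δ = τ i δ :=
        subst_nonvar σ (fun a b c d e => hd2 a b c d e)
      have hl : subst (subst E τ) σ (γ₁ ++ δ) = subst E τ (γ₁ ++ δ) := by
        apply subst_nonvar
        intro α j β hγ hvj
        obtain ⟨γ₁', i', δ', rfl, hvi', hvj'⟩ := subst_var_src τ hvj
        rw [List.append_assoc] at hγ
        have hgg : γ₁' = γ₁ := wf_uniq_decomp hE hγ.symm hvi' hv
        subst hgg
        have hδ : δ = δ' ++ β := List.append_cancel_left hγ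
        have hii : i' = i := by
          rw [hv] at hvi'
          exact (Sum.inr.inj (Option.some.inj hvi')).symm
        subst hii
        exact hd2 δ' j β hδ hvj'
      rw [hl, subst_var hE hv τ δ, hr2]
  · push_neg at hdec
    have hr2 : subst E (fun i => subst (τ i) σ) γ = E γ :=
      subst_nonvar _ (fun a b c d e => hdec a b c d e)
    have hl : subst (subst E τ) σ γ = subst E τ γ := by
      apply subst_nonvar
      intro α j β hγ hvj
      obtain ⟨γ₁', i', δ', rfl, hvi', hvj'⟩ := subst_var_src τ hvj
      rw [List.append_assoc] at hγ
      exact hdec γ₁' i' (δ' ++ β) hγ hvi'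
    have hl2 : subst E τ γ = E γ :=
      subst_nonvar _ (fun a b c d e => hdec a b c d e)
    rw [hl, hl2, hr2]

/-- Reconstructing a term with nonterminal root as a node. -/
lemma node_eq_self {s : Tm N} {X : N} (hr : s [] = some (Sum.inl X)) :
    node X (fun i => subAt s [i]) = s := by
  funext γ
  match γ with
  | [] => rw [hr]; rfl
  | i :: δ => rfl

/-- Characterization of grammar steps. -/
lemma gstep_iff {A : Type*} (G : FOG N A) (a : A) (s t : Tm N) :
    gstep G a s t ↔ ∃ X Er, (X, a, Er) ∈ G.rules ∧ s [] = some (Sum.inl X) ∧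
      t = subst Er (fun i => subAt s [i]) := by
  constructor
  · rintro ⟨X, Er, Gs, hrule, rfl, rfl⟩
    refine ⟨X, Er, hrule, rfl, ?_⟩
    congr 1
  · rintro ⟨X, Er, hrule, hr, rfl⟩
    exact ⟨X, Er, _, hrule, (node_eq_self hr).symm, rfl⟩

/-- A well-formed term bounded by one variable with nonterminal root. -/
lemma root_nonterminal {F : Tm N} (hF : TmWF ar F) (hvb : VarsBdd 1 F)
    (hne : F ≠ varTm N 1) : ∃ X, F [] = some (Sum.inl X) := by
  obtain ⟨v, hv⟩ := Option.isSome_iff_exists.mp hF.1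
  cases v with
  | inl X => exact ⟨X, hv⟩
  | inr i =>
    obtain ⟨h1, h2⟩ := hvb [] i hv
    have hi : i = 1 := le_antisymm h2 h1
    subst hi
    exact absurd (wf_root_var hF hv) hne

variable {A : Type*} {G : FOG N A}

/-- Reflecting a step of a substituted term to a step of the term itself. -/
lemma gstep_reflect {F t : Tm N} {σ : ℕ → Tm N} {a : A}
    (hF : TmWF G.arity F) {X : N} (hr : F [] = some (Sum.inl X))
    (hs : gstep G a (subst F σ) t) :
    ∃ F', gstep G a F F' ∧ TmWF G.arity F' ∧
      (∀ n, VarsBdd n F → VarsBdd n F') ∧ t = subst F' σ := by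
  obtain ⟨X', Er, hrule, hr', rfl⟩ := (gstep_iff G a _ _).mp hs
  rw [subst_root σ hr] at hr'
  have hr2 : F [] = some (Sum.inl X') := by rw [hr]; exact hr'
  obtain ⟨-, hwfE, hvb⟩ := G.rules_wf _ hrule
  set τ : ℕ → Tm N := fun i => subAt F [i] with hτdef
  have hτwf : ∀ γ i, Er γ = some (Sum.inr i) → TmWF G.arity (τ i) := by
    intro γ i hv
    obtain ⟨h1, h2⟩ := hvb γ i hv
    exact subAt_wf hF ((hF.2 [] i).mpr ⟨Sum.inl X', hr2, h1, h2⟩)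
  refine ⟨subst Er τ, ?_, ?_, ?_, ?_⟩
  · exact (gstep_iff G a F _).mpr ⟨X', Er, hrule, hr2, rfl⟩
  · exact subst_wf hwfE τ hτwf
  · intro n hn
    apply subst_varsBdd
    intro γ i hv δ j hj
    exact hn ([i] ++ δ) j hj
  · rw [subst_subst hwfE τ σ hτwf]
    exact congrArg (subst Er) (funext (subAt_subst hF hr σ))

/-- Transporting a step along a substitution. -/
lemma gstep_preserve {F F' : Tm N} (σ : ℕ → Tm N) {a : A}
    (hF : TmWF G.arity F) {X : N} (hr : F [] = some (Sum.inl X))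
    (hs : gstep G a F F') : gstep G a (subst F σ) (subst F' σ) := by
  obtain ⟨X', Er, hrule, hr', rfl⟩ := (gstep_iff G a _ _).mp hs
  obtain ⟨-, hwfE, hvb⟩ := G.rules_wf _ hrule
  set τ : ℕ → Tm N := fun i => subAt F [i] with hτdef
  have hτwf : ∀ γ i, Er γ = some (Sum.inr i) → TmWF G.arity (τ i) := by
    intro γ i hv
    obtain ⟨h1, h2⟩ := hvb γ i hv
    exact subAt_wf hF ((hF.2 [] i).mpr ⟨Sum.inl X', hr', h1, h2⟩)
  apply (gstep_iff G a _ _).mpr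
  refine ⟨X', Er, hrule, subst_root σ hr', ?_⟩
  rw [subst_subst hwfE τ σ hτwf]
  exact (congrArg (subst Er) (funext (subAt_subst hF hr' σ))).symm

/-- The main induction: traces of a substituted term do not depend on the
substitution, as long as no variable gets exposed. -/
lemma main_traces : ∀ (w : List A) (F : Tm N), TmWF G.arity F → VarsBdd 1 F →
    (∀ u F'', Steps (gstep G) u F F'' → F'' ≠ varTm N 1) →
    ∀ (σ σ' : ℕ → Tm N) (t : Tm N), Steps (gstep G) w (subst F σ) t →
      ∃ t', Steps (gstep G) w (subst F σ') t' := by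
  intro w
  induction w with
  | nil =>
    intro F _ _ _ σ σ' t _
    exact ⟨subst F σ', rfl⟩
  | cons a ws ih =>
    rintro F hF hvb hnv σ σ' t ⟨s₁, hstep, hrest⟩
    have hne : F ≠ varTm N 1 := hnv [] F rfl
    obtain ⟨X, hr⟩ := root_nonterminal hF hvb hne
    obtain ⟨F', hstF, hF', hvb', rfl⟩ := gstep_reflect hF hr hstep
    have hnv' : ∀ u F'', Steps (gstep G) u F' F'' → F'' ≠ varTm N 1 := by
      intro u F'' hS
      exact hnv (a :: u) F'' ⟨F', hstF, hS⟩
    obtain ⟨t', ht'⟩ := ih F' hF' (hvb' 1 hvb) hnv' σ σ' t hrest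
    exact ⟨t', subst F' σ', gstep_preserve σ' hF hr hstF, ht'⟩

end Lemmas

/-- if no word `u` satisfies `E →ᵘ x₁` then `E(T) ∼ E(T')` for all
ground regular terms `T, T'`. -/
theorem sim_subst_of_no_expose {N A : Type*} [Fintype N] [Fintype A] (G : FOG N A)
    (E : Tm N) (hEreg : TmRegular E) (hEwf : TmWF G.arity E) (hEvars : VarsBdd 1 E)
    (hnoexp : ¬ ∃ u : List A, Steps (gstep G) u E (varTm N 1)) :
    ∀ T T' : Tm N,
      TmGround T → TmRegular T → TmWF G.arity T →
      TmGround T' → TmRegular T' → TmWF G.arity T' →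
      Sim (gstep G) (subst E (fun j => if j = 1 then T else varTm N j))
        (subst E (fun j => if j = 1 then T' else varTm N j)) := by
  intro T T' _ _ _ _ _ _
  have hnv : ∀ u F'', Steps (gstep G) u E F'' → F'' ≠ varTm N 1 := by
    intro u F'' hS heq
    exact hnoexp ⟨u, heq ▸ hS⟩
  apply Set.Subset.antisymm
  · rintro w ⟨t, ht⟩
    exact main_traces w E hEwf hEvars hnv _ _ t ht
  · rintro w ⟨t, ht⟩
    exact main_traces w E hEwf hEvars hnv _ _ t ht

end FOGPaper
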